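/- For all (k1,k2) ∈ ℤ²_{≥0} and ℓ ≥ 0: ∑_{0≤i≤k1, 0≤j≤k2} binom(k1,i)·binom(k2,j)·i!·j!·C(i,j,ℓ) = (k1·x + k2·y + z)^ℓ, as polynomials in ℤ[x,y,z]. -/

import Mathlib

/-- Stirling numbers of the second kind. -/
def stirling2 : ℕ → ℕ → ℕ
  | 0, 0 => 1
  | 0, _ + 1 => 0
  | _ + 1, 0 => 0
  | n + 1, k + 1 => stirling2 n k + (k + 1) * stirling2 n (k + 1)

open MvPolynomial in
/-- The polynomial `C(k1,k2,ℓ) = ∑_{i1 ≥ k1, i2 ≥ k2, i1+i2 ≤ ℓ}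
binom(ℓ,i1) binom(ℓ-i1,i2) S(i1,k1) S(i2,k2) x^{i1} y^{i2} z^{ℓ-i1-i2}` in `ℤ[x,y,z]`
(the conditions `i1 ≥ k1`, `i2 ≥ k2` are automatic since `S(i,k) = 0` for `i < k`). -/
noncomputable def Cpoly (k1 k2 l : ℕ) : MvPolynomial (Fin 3) ℤ :=
  ∑ i1 ∈ Finset.range (l + 1), ∑ i2 ∈ Finset.range (l + 1 - i1),
    (MvPolynomial.C ((l.choose i1 * (l - i1).choose i2
        * stirling2 i1 k1 * stirling2 i2 k2 : ℕ) : ℤ)) *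
      X 0 ^ i1 * X 1 ^ i2 * X 2 ^ (l - i1 - i2)

open MvPolynomial in
/-- `A_{ij} = i·x + j·y + z`. -/
noncomputable def Apoly (i j : ℕ) : MvPolynomial (Fin 3) ℤ :=
  (i : MvPolynomial (Fin 3) ℤ) * X 0 + (j : MvPolynomial (Fin 3) ℤ) * X 1 + X 2

lemma stirling2_eq_zero_of_lt : ∀ {n k : ℕ}, n < k → stirling2 n k = 0 := by
  intro n
  induction n with
  | zero => intro k h; match k, h with | k + 1, _ => rfl
  | succ n ih =>
    intro k h
    match k, h with
    | k + 1, h => simp [stirling2, ih (show n < k by omega), ih (show n < k + 1 by omega)]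

lemma desc_mul (k i : ℕ) : k * k.descFactorial i = k.descFactorial (i + 1) + i * k.descFactorial i := by
  rcases le_or_gt i k with h | h
  · rw [Nat.descFactorial_succ]
    have : k - i + i = k := by omega
    nlinarith [Nat.descFactorial_succ k i]
  · rw [Nat.descFactorial_eq_zero_iff_lt.2 h, Nat.descFactorial_eq_zero_iff_lt.2 (by omega)]
    ring

lemma sumS (n k : ℕ) : ∑ i ∈ Finset.range (n + 1), stirling2 n i * k.descFactorial i = k ^ n := by
  induction n with
  | zero => simp [stirling2]
  | succ n ih =>
    rw [Finset.sum_range_succ']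
    simp only [stirling2]
    have key : ∀ i ∈ Finset.range (n+1), (stirling2 n i + (i + 1) * stirling2 n (i + 1)) * k.descFactorial (i + 1)
        = stirling2 n i * k.descFactorial (i + 1) + ((i+1) * stirling2 n (i+1)) * k.descFactorial (i+1) := by
      intro i _; ring
    rw [Finset.sum_congr rfl key, Finset.sum_add_distrib]
    have e2 : ∑ i ∈ Finset.range (n + 1), ((i+1) * stirling2 n (i+1)) * k.descFactorial (i+1)
        = ∑ i ∈ Finset.range (n + 1), (i * stirling2 n i) * k.descFactorial i := by
      rw [Finset.sum_range_succ, stirling2_eq_zero_of_lt (Nat.lt_succ_self n)]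
      rw [Finset.sum_range_succ' (fun i => (i * stirling2 n i) * k.descFactorial i) n]
      simp
    rw [e2, pow_succ, ← ih, Finset.sum_mul]
    have key2 : ∀ i ∈ Finset.range (n+1), stirling2 n i * k.descFactorial i * k
        = stirling2 n i * k.descFactorial (i+1) + i * stirling2 n i * k.descFactorial i := by
      intro i _
      rw [mul_assoc, mul_comm (k.descFactorial i) k, desc_mul]
      ring
    rw [Finset.sum_congr rfl key2, Finset.sum_add_distrib]
    simp [mul_assoc]

lemma sumS' (n k : ℕ) : ∑ i ∈ Finset.range (k + 1), k.choose i * i.factorial * stirling2 n i = k ^ n := by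
  rw [← sumS n k]
  rcases le_or_gt n k with h | h
  · rw [← Finset.sum_subset (Finset.range_subset_range.2 (by omega : n + 1 ≤ k + 1))]
    · exact Finset.sum_congr rfl fun i _ => by
        rw [Nat.descFactorial_eq_factorial_mul_choose]; ring
    · intro i _ hi
      simp only [Finset.mem_range, not_lt] at hi
      rw [stirling2_eq_zero_of_lt (by omega), mul_zero]
  · rw [← Finset.sum_subset (Finset.range_subset_range.2 (by omega : k + 1 ≤ n + 1))]
    · exact Finset.sum_congr rfl fun i _ => by
        rw [Nat.descFactorial_eq_factorial_mul_choose]; ring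
    · intro i _ hi
      simp only [Finset.mem_range, not_lt] at hi
      rw [Nat.descFactorial_eq_zero_iff_lt.2 (by omega), mul_zero]

lemma keyN (k1 k2 i1 i2 c1 c2 : ℕ) :
    ∑ i ∈ Finset.range (k1 + 1), ∑ j ∈ Finset.range (k2 + 1),
      (k1.choose i * k2.choose j * i.factorial * j.factorial)
        * (c1 * c2 * stirling2 i1 i * stirling2 i2 j)
      = k1 ^ i1 * k2 ^ i2 * c1 * c2 := by
  have : k1 ^ i1 * k2 ^ i2 * c1 * c2 =
      (∑ i ∈ Finset.range (k1 + 1), k1.choose i * i.factorial * stirling2 i1 i)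
      * (∑ j ∈ Finset.range (k2 + 1), k2.choose j * j.factorial * stirling2 i2 j) * (c1 * c2) := by
    rw [sumS', sumS']; ring
  rw [this, Finset.sum_mul_sum, Finset.sum_mul]
  refine Finset.sum_congr rfl fun i _ => ?_
  rw [Finset.sum_mul]
  exact Finset.sum_congr rfl fun j _ => by ring

lemma swap4 {M : Type*} [AddCommMonoid M] (A B L : Finset ℕ) (R : ℕ → Finset ℕ)
    (t : ℕ → ℕ → ℕ → ℕ → M) :
    ∑ i ∈ A, ∑ j ∈ B, ∑ i1 ∈ L, ∑ i2 ∈ R i1, t i j i1 i2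
      = ∑ i1 ∈ L, ∑ i2 ∈ R i1, ∑ i ∈ A, ∑ j ∈ B, t i j i1 i2 :=
  calc ∑ i ∈ A, ∑ j ∈ B, ∑ i1 ∈ L, ∑ i2 ∈ R i1, t i j i1 i2
      = ∑ i ∈ A, ∑ i1 ∈ L, ∑ j ∈ B, ∑ i2 ∈ R i1, t i j i1 i2 :=
        Finset.sum_congr rfl fun i _ => Finset.sum_comm
    _ = ∑ i1 ∈ L, ∑ i ∈ A, ∑ j ∈ B, ∑ i2 ∈ R i1, t i j i1 i2 := Finset.sum_comm
    _ = ∑ i1 ∈ L, ∑ i ∈ A, ∑ i2 ∈ R i1, ∑ j ∈ B, t i j i1 i2 :=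
        Finset.sum_congr rfl fun i1 _ => Finset.sum_congr rfl fun i _ => Finset.sum_comm
    _ = ∑ i1 ∈ L, ∑ i2 ∈ R i1, ∑ i ∈ A, ∑ j ∈ B, t i j i1 i2 :=
        Finset.sum_congr rfl fun i1 _ => Finset.sum_comm

open MvPolynomial

theorem sum_desc_Cpoly_eq_Apoly_pow (k1 k2 l : ℕ) :
    ∑ i ∈ Finset.range (k1 + 1), ∑ j ∈ Finset.range (k2 + 1),
        (MvPolynomial.C ((k1.choose i * k2.choose j * i.factorial * j.factorial : ℕ) : ℤ))
          * Cpoly i j l =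
      Apoly k1 k2 ^ l := by
  have expand : Apoly k1 k2 ^ l = ∑ i1 ∈ Finset.range (l + 1), ∑ i2 ∈ Finset.range (l + 1 - i1),
      (MvPolynomial.C ((k1 ^ i1 * k2 ^ i2 * l.choose i1 * (l - i1).choose i2 : ℕ) : ℤ))
        * X 0 ^ i1 * X 1 ^ i2 * X 2 ^ (l - i1 - i2) := by
    rw [Apoly, add_assoc, add_pow]
    refine Finset.sum_congr rfl fun i1 h1 => ?_
    have h1' : i1 ≤ l := by simpa using Nat.lt_succ_iff.mp (Finset.mem_range.mp h1)
    have hr : l - i1 + 1 = l + 1 - i1 := by omega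
    rw [add_pow, hr, Finset.mul_sum, Finset.sum_mul]
    refine Finset.sum_congr rfl fun i2 h2 => ?_
    push_cast
    simp only [map_mul, map_pow, map_natCast]
    ring
  rw [expand]
  simp only [Cpoly, Finset.mul_sum]
  rw [swap4]
  refine Finset.sum_congr rfl fun i1 _ => Finset.sum_congr rfl fun i2 _ => ?_
  have step : ∀ i ∈ Finset.range (k1+1), ∀ j ∈ Finset.range (k2+1),
      (MvPolynomial.C ((k1.choose i * k2.choose j * i.factorial * j.factorial : ℕ) : ℤ)) *
        ((MvPolynomial.C ((l.choose i1 * (l - i1).choose i2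
          * stirling2 i1 i * stirling2 i2 j : ℕ) : ℤ)) *
          (X 0 : MvPolynomial (Fin 3) ℤ) ^ i1 * X 1 ^ i2 * X 2 ^ (l - i1 - i2))
      = (MvPolynomial.C (((k1.choose i * k2.choose j * i.factorial * j.factorial)
          * (l.choose i1 * (l - i1).choose i2 * stirling2 i1 i * stirling2 i2 j) : ℕ) : ℤ))
          * (X 0 ^ i1 * X 1 ^ i2 * X 2 ^ (l - i1 - i2)) := by
    intro i _ j _
    push_cast
    simp only [map_mul, map_natCast]
    ring
  refine (Finset.sum_congr rfl fun i hi => Finset.sum_congr rfl fun j hj => step i hi j hj).trans ?_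
  simp only [← Finset.sum_mul, ← map_sum]
  have hC : (∑ i ∈ Finset.range (k1 + 1), ∑ j ∈ Finset.range (k2 + 1),
      ((k1.choose i * k2.choose j * i.factorial * j.factorial
        * (l.choose i1 * (l - i1).choose i2 * stirling2 i1 i * stirling2 i2 j) : ℕ) : ℤ))
      = ((k1 ^ i1 * k2 ^ i2 * l.choose i1 * (l - i1).choose i2 : ℕ) : ℤ) := by
    exact_mod_cast keyN k1 k2 i1 i2 (l.choose i1) ((l - i1).choose i2)
  rw [hC]
  ring
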